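/- Let T : M × M × M → M be a symmetric F-trilinear map satisfying q(x + t·w) = q(x) + 4t·{T(x,x,x),w} + 6t²·{T(x,x,w),w} + 4t³·{T(x,w,w),w} + t⁴·q(w) for all x, w ∈ M and all t ∈ F (so T is the trilinear operator determined by the full linearization of q via the symplectic form). Then for x = (α,β,A,B) ∈ M the following are equivalent: (a) αA − B# = 0, βB − A# = 0, and (αβ − (A,B))C + ABC + CBA = 0 for all C ∈ J; (b) 3·T(x,x,y) + {x,y}·x = 0 for all y ∈ M. -/

import Mathlib

open Matrix

namespace Freudenthal

variable (F : Type*) [Field F]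

/-- The cubic Jordan algebra `J = M₃(F)`. -/
abbrev Mat := Matrix (Fin 3) (Fin 3) F

/-- The trace bilinear form `(A, B) = tr(A·B)` on `J`. -/
def tb (A B : Mat F) : F := (A * B).trace

/-- The Freudenthal module `M = F ⊕ F ⊕ J ⊕ J`, elements `(α, β, A, B)`. -/
abbrev FM := F × F × Mat F × Mat F

/-- The quartic norm `q(x) = 8(A#,B#) − 8α·det A − 8β·det B − 2((A,B) − αβ)²`. -/
def qf (x : FM F) : F :=
  8 * tb F x.2.2.1.adjugate x.2.2.2.adjugate - 8 * x.1 * x.2.2.1.det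
    - 8 * x.2.1 * x.2.2.2.det - 2 * (tb F x.2.2.1 x.2.2.2 - x.1 * x.2.1) ^ 2

/-- The symplectic form `{x, y} = αδ − βγ + (A,D) − (B,C)`. -/
def symp (x y : FM F) : F :=
  x.1 * y.2.1 - x.2.1 * y.1 + tb F x.2.2.1 y.2.2.2 - tb F x.2.2.2 y.2.2.1

/-- The rank `≤ 1` condition: `αA − B# = 0`, `βB − A# = 0`, and
`(αβ − (A,B))C + ABC + CBA = 0` for all `C ∈ J`. -/
def RankLeOne (x : FM F) : Prop :=
  x.1 • x.2.2.1 - x.2.2.2.adjugate = 0 ∧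
  x.2.1 • x.2.2.2 - x.2.2.1.adjugate = 0 ∧
  ∀ C : Mat F,
    (x.1 * x.2.1 - tb F x.2.2.1 x.2.2.2) • C
      + x.2.2.1 * x.2.2.2 * C + C * x.2.2.2 * x.2.2.1 = 0

end Freudenthal

open Freudenthal

namespace FAux

variable {F : Type*} [Field F]

/-- The bilinearization `A × B = (A+B)# − A# − B#` of the adjugate. -/
def cross (A B : Mat F) : Mat F :=
  A * B + B * A - A.trace • B - B.trace • A + (A.trace * B.trace - (A * B).trace) • (1 : Mat F)

lemma tb_add_left (A B C : Mat F) : tb F (A + B) C = tb F A C + tb F B C := by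
  simp [tb, add_mul]
lemma tb_add_right (A B C : Mat F) : tb F A (B + C) = tb F A B + tb F A C := by
  simp [tb, mul_add]
lemma tb_sub_left (A B C : Mat F) : tb F (A - B) C = tb F A C - tb F B C := by
  simp [tb, sub_mul]
lemma tb_sub_right (A B C : Mat F) : tb F A (B - C) = tb F A B - tb F A C := by
  simp [tb, mul_sub]
lemma tb_smul_left (t : F) (A B : Mat F) : tb F (t • A) B = t * tb F A B := by
  simp [tb, smul_mul_assoc]
lemma tb_smul_right (t : F) (A B : Mat F) : tb F A (t • B) = t * tb F A B := by
  simp [tb, mul_smul_comm]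
lemma tb_comm (A B : Mat F) : tb F A B = tb F B A := trace_mul_comm A B
lemma tb_zero_right (A : Mat F) : tb F A 0 = 0 := by simp [tb]
lemma tb_zero_left (A : Mat F) : tb F 0 A = 0 := by simp [tb]

lemma cross_comm (A B : Mat F) : cross A B = cross B A := by
  unfold cross
  rw [trace_mul_comm]
  ring_nf
  abel

set_option maxHeartbeats 1000000

lemma cross_self (A : Mat F) : cross A A = (2:F) • A.adjugate := by
  ext i j
  fin_cases i <;> fin_cases j <;>
    simp [cross, Matrix.adjugate_fin_three, Matrix.trace_fin_three, Matrix.mul_apply,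
      Fin.sum_univ_three, Matrix.one_apply] <;> ring

lemma tb_cross_assoc (U V W : Mat F) : tb F (cross U V) W = tb F U (cross V W) := by
  simp only [tb, cross, add_mul, mul_add, sub_mul, mul_sub, smul_mul_assoc, mul_smul_comm,
    trace_add, trace_sub, trace_smul, smul_eq_mul, one_mul, mul_one, Matrix.trace_one]
  rw [mul_assoc V U W, trace_mul_comm V (U*W), mul_assoc U W V, mul_assoc U V W]
  ring

lemma tb_self_cross (U W : Mat F) : tb F U (cross U W) = 2 * tb F U.adjugate W := by
  rw [← tb_cross_assoc, cross_self, tb_smul_left]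

lemma tb_cross_left_comm (U V W : Mat F) : tb F U (cross V W) = tb F V (cross U W) := by
  rw [← tb_cross_assoc, cross_comm, tb_cross_assoc]

lemma adjugate_add_smul (t : F) (A C : Mat F) :
    (A + t • C).adjugate = A.adjugate + t • cross A C + t^2 • C.adjugate := by
  ext i j
  fin_cases i <;> fin_cases j <;>
    simp [cross, Matrix.adjugate_fin_three, Matrix.trace_fin_three, Matrix.mul_apply,
      Fin.sum_univ_three, Matrix.one_apply] <;> ring

lemma det_add_smul (t : F) (A C : Mat F) :
    (A + t • C).det = A.det + t * tb F A.adjugate C + t^2 * tb F C.adjugate A + t^3 * C.det := by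
  simp [tb, Matrix.det_fin_three, Matrix.adjugate_fin_three, Matrix.trace_fin_three,
    Matrix.mul_apply, Matrix.vecMul, dotProduct, Fin.sum_univ_three]
  ring

lemma cross_add_left (A B C : Mat F) : cross (A + B) C = cross A C + cross B C := by
  ext i j
  fin_cases i <;> fin_cases j <;>
    simp [cross, Matrix.trace_fin_three, Matrix.mul_apply,
      Fin.sum_univ_three, Matrix.one_apply] <;> ring

lemma cross_smul_left (t : F) (A C : Mat F) : cross (t • A) C = t • cross A C := by
  ext i j
  fin_cases i <;> fin_cases j <;>
    simp [cross, Matrix.trace_fin_three, Matrix.mul_apply,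
      Fin.sum_univ_three, Matrix.one_apply] <;> ring

lemma cross_add_right (A B C : Mat F) : cross A (B + C) = cross A B + cross A C := by
  rw [cross_comm, cross_add_left, cross_comm B A, cross_comm C A]

lemma cross_smul_right (t : F) (A C : Mat F) : cross A (t • C) = t • cross A C := by
  rw [cross_comm, cross_smul_left, cross_comm]

lemma cross_sub_left (A B C : Mat F) : cross (A - B) C = cross A C - cross B C := by
  have := cross_add_left (A - B) B C
  rw [sub_add_cancel] at this
  rw [this]; abel

lemma cross_zero_left (C : Mat F) : cross 0 C = 0 := by
  have := cross_smul_left (0:F) 0 C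
  simpa using this

lemma cross_zero_right (C : Mat F) : cross C 0 = 0 := by
  rw [cross_comm]; exact cross_zero_left C

/-- The linearized Cayley–Hamilton identity `(A×C)×B + ABC + CBA = (B,C)A + (A,B)C`. -/
lemma Istar (A B C : Mat F) :
    cross (cross A C) B + A * B * C + C * B * A = tb F B C • A + tb F A B • C := by
  ext i j
  fin_cases i <;> fin_cases j <;>
    simp [cross, tb, Matrix.trace_fin_three, Matrix.mul_apply,
      Fin.sum_univ_three, Matrix.one_apply] <;> ring

lemma Istar' (A B C : Mat F) :
    cross (cross A C) B = tb F B C • A + tb F A B • C - A * B * C - C * B * A := by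
  rw [← Istar A B C]; abel

/-- The cubic map `x ↦ T(x,x,x)`. -/
def Tc (x : FM F) : FM F :=
  (x.1 * (tb F x.2.2.1 x.2.2.2 - x.1 * x.2.1) - 2 * x.2.2.2.det,
   2 * x.2.2.1.det - x.2.1 * (tb F x.2.2.1 x.2.2.2 - x.1 * x.2.1),
   (2:F) • cross x.2.2.1.adjugate x.2.2.2 - (2 * x.2.1) • x.2.2.2.adjugate
     - (tb F x.2.2.1 x.2.2.2 - x.1 * x.2.1) • x.2.2.1,
   (2 * x.1) • x.2.2.1.adjugate - (2:F) • cross x.2.2.1 x.2.2.2.adjugate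
     + (tb F x.2.2.1 x.2.2.2 - x.1 * x.2.1) • x.2.2.2)

/-- The map `(x, y) ↦ 3·T(x,x,y)`. -/
def Ec (x y : FM F) : FM F :=
  ((y.1 * (tb F x.2.2.1 x.2.2.2 - x.1 * x.2.1)
      + x.1 * (tb F x.2.2.1 y.2.2.2 + tb F y.2.2.1 x.2.2.2 - x.1 * y.2.1 - x.2.1 * y.1)
      - 2 * tb F x.2.2.2.adjugate y.2.2.2),
   (2 * tb F x.2.2.1.adjugate y.2.2.1
      - y.2.1 * (tb F x.2.2.1 x.2.2.2 - x.1 * x.2.1)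
      - x.2.1 * (tb F x.2.2.1 y.2.2.2 + tb F y.2.2.1 x.2.2.2 - x.1 * y.2.1 - x.2.1 * y.1)),
   ((2:F) • cross (cross x.2.2.1 y.2.2.1) x.2.2.2 + (2:F) • cross x.2.2.1.adjugate y.2.2.2
      - (2 * y.2.1) • x.2.2.2.adjugate - (2 * x.2.1) • cross x.2.2.2 y.2.2.2
      - (tb F x.2.2.1 y.2.2.2 + tb F y.2.2.1 x.2.2.2 - x.1 * y.2.1 - x.2.1 * y.1) • x.2.2.1
      - (tb F x.2.2.1 x.2.2.2 - x.1 * x.2.1) • y.2.2.1),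
   ((2 * y.1) • x.2.2.1.adjugate + (2 * x.1) • cross x.2.2.1 y.2.2.1
      - (2:F) • cross y.2.2.1 x.2.2.2.adjugate - (2:F) • cross x.2.2.1 (cross x.2.2.2 y.2.2.2)
      + (tb F x.2.2.1 y.2.2.2 + tb F y.2.2.1 x.2.2.2 - x.1 * y.2.1 - x.2.1 * y.1) • x.2.2.2
      + (tb F x.2.2.1 x.2.2.2 - x.1 * x.2.1) • y.2.2.2))

set_option maxHeartbeats 2000000 in
/-- Expansion of the quartic form along a line. -/
lemma expand (x w : FM F) (t : F) :
    qf F (x + t • w) = qf F x + 4 * t * symp F (Tc x) w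
      + 2 * t^2 * symp F (Ec x w) w + 4 * t^3 * symp F (Tc w) x + t^4 * qf F w := by
  obtain ⟨a, b, A, B⟩ := x
  obtain ⟨g, d, C, D⟩ := w
  simp only [qf, symp, Tc, Ec, Prod.smul_mk, Prod.mk_add_mk, smul_eq_mul]
  simp only [adjugate_add_smul, det_add_smul]
  simp only [tb_add_left, tb_add_right, tb_sub_left, tb_sub_right, tb_smul_left, tb_smul_right]
  simp only [tb_cross_assoc, cross_self, tb_smul_right]
  simp only [tb_cross_left_comm, tb_self_cross, tb_comm, cross_comm]
  ring

set_option maxHeartbeats 1000000 in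
/-- Polarization identity for `Tc`, identifying `Ec`. -/
lemma Eid (x y : FM F) :
    (6:F) • Tc (x + (1:F) • y) - (2:F) • Tc (x + (-1:F) • y) - Tc (x + (2:F) • y)
      - (3:F) • Tc x = (6:F) • Ec x y := by
  obtain ⟨a, b, A, B⟩ := x
  obtain ⟨g, d, C, D⟩ := y
  simp only [Tc, Ec, Prod.smul_mk, Prod.mk_add_mk, smul_eq_mul, Prod.mk_sub_mk]
  refine Prod.ext ?_ (Prod.ext ?_ (Prod.ext ?_ ?_)) <;>
    simp only [adjugate_add_smul, det_add_smul, cross_add_left, cross_add_right,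
      cross_smul_left, cross_smul_right, tb_add_left, tb_add_right, tb_smul_left,
      tb_smul_right, smul_eq_mul]
  · ring
  · ring
  · module
  · module

lemma N1 (a b g d : F) (A B C D : Mat F) :
    (Ec (a,b,A,B) (g,d,C,D)).1 + symp F (a,b,A,B) (g,d,C,D) * a
      = g * (tb F A B - 3*(a*b)) + 2 * tb F (a • A - B.adjugate) D := by
  simp only [Ec, symp, tb_sub_left, tb_smul_left, tb_comm C]
  ring

lemma N2 (a b g d : F) (A B C D : Mat F) :
    (Ec (a,b,A,B) (g,d,C,D)).2.1 + symp F (a,b,A,B) (g,d,C,D) * b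
      = 2 * tb F (A.adjugate - b • B) C - d * (tb F A B - 3*(a*b)) := by
  simp only [Ec, symp, tb_sub_left, tb_smul_left, tb_comm C]
  ring

lemma N3 (a b g d : F) (A B C D : Mat F) :
    (Ec (a,b,A,B) (g,d,C,D)).2.2.1 + symp F (a,b,A,B) (g,d,C,D) • A
      = (-2:F) • (A*B*C + C*B*A) + (tb F A B + a*b) • C
        + (2:F) • cross (A.adjugate - b • B) D + (2*d) • (a • A - B.adjugate) := by
  simp only [Ec, symp, Istar', cross_sub_left, cross_smul_left, tb_comm C]
  module

lemma N4 (a b g d : F) (A B C D : Mat F) :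
    (Ec (a,b,A,B) (g,d,C,D)).2.2.2 + symp F (a,b,A,B) (g,d,C,D) • B
      = (2:F) • (B*A*D + D*A*B) - (tb F A B + a*b) • D
        + (2:F) • cross (a • A - B.adjugate) C + (2*g) • (A.adjugate - b • B) := by
  have hI : cross A (cross B D) = tb F A D • B + tb F B A • D - B * A * D - D * A * B := by
    rw [cross_comm]; exact Istar' B A D
  simp only [Ec, symp, hI, cross_sub_left, cross_smul_left, tb_comm C,
    cross_comm C B.adjugate, tb_comm B A]
  module

lemma tb_std (M : Mat F) (i j : Fin 3) : tb F M (Matrix.single j i 1) = M i j := by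
  fin_cases i <;> fin_cases j <;>
    simp [tb, Matrix.trace_fin_three, Matrix.mul_apply, Fin.sum_univ_three,
      Matrix.single, Matrix.of_apply]

lemma tb_nondeg {M : Mat F} (h : ∀ D : Mat F, tb F M D = 0) : M = 0 := by
  ext i j
  have := h (Matrix.single j i 1)
  rw [tb_std] at this
  simpa using this

lemma symp_sub_left (u v w : FM F) : symp F (u - v) w = symp F u w - symp F v w := by
  obtain ⟨a, b, A, B⟩ := u; obtain ⟨a', b', A', B'⟩ := v
  simp only [symp, Prod.mk_sub_mk, tb_sub_left]
  ring

lemma symp_nondeg {u : FM F} (h : ∀ w : FM F, symp F u w = 0) : u = 0 := by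
  obtain ⟨a, b, A, B⟩ := u
  have h1 := h (0, 1, 0, 0)
  have h2 := h (1, 0, 0, 0)
  simp only [symp, tb, mul_zero, zero_mul, mul_one, one_mul, Matrix.trace_zero,
    Matrix.zero_mul, Matrix.mul_zero] at h1 h2
  have hA : A = 0 := by
    refine tb_nondeg fun D => ?_
    have := h (0, 0, 0, D)
    simpa [symp, tb] using this
  have hB : B = 0 := by
    refine tb_nondeg fun C => ?_
    have := h (0, 0, C, 0)
    simpa [symp, tb] using this
  refine Prod.ext ?_ (Prod.ext ?_ (Prod.ext ?_ ?_)) <;> simp_all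

/-- The scalar-matrix characterization of the third rank-one condition. -/
lemma central {M : Mat F} (h : ∀ C : Mat F, M * C = C * M) : M = (M 0 0) • 1 := by
  obtain ⟨r, hr⟩ := mem_range_scalar_of_commute_single
    (M := M) (fun i j _ => (h _).symm)
  have : M 0 0 = r := by rw [← hr]; simp [Matrix.scalar_apply]
  rw [this, ← hr]
  simp [Matrix.scalar_apply, Matrix.smul_one_eq_diagonal]

end FAux

open FAux

/-- **Characterization of rank `≤ 1` elements via the trilinear operator.**
Let `T` be the symmetric trilinear map on `M = F ⊕ F ⊕ M₃(F) ⊕ M₃(F)` determined by the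
full linearization of the quartic norm `q` via the symplectic form. Then for
`x = (α,β,A,B)` the conditions `αA − B# = 0`, `βB − A# = 0`,
`(αβ − (A,B))C + ABC + CBA = 0` (for all `C`) hold if and only if
`3·T(x,x,y) + {x,y}·x = 0` for all `y ∈ M`. -/
theorem rank_le_one_iff_trilinear (F : Type*) [Field F]
    (h2 : (2 : F) ≠ 0) (h3 : (3 : F) ≠ 0)
    (T : FM F → FM F → FM F → FM F)
    (hlin : ∀ y z : FM F, IsLinearMap F (fun a => T a y z))
    (hsym1 : ∀ x y z : FM F, T x y z = T y x z)
    (hsym2 : ∀ x y z : FM F, T x y z = T x z y)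
    (hq : ∀ (x w : FM F) (t : F),
      qf F (x + t • w) = qf F x + 4 * t * symp F (T x x x) w
        + 6 * t ^ 2 * symp F (T x x w) w + 4 * t ^ 3 * symp F (T x w w) w
        + t ^ 4 * qf F w)
    (x : FM F) :
    RankLeOne F x ↔ ∀ y : FM F, (3 : F) • T x x y + symp F x y • x = 0 := by
  have h6 : (6 : F) ≠ 0 := by
    intro h
    exact h2 (by apply mul_left_cancel₀ h3; linear_combination h)
  have h24 : (24 : F) ≠ 0 := by
    intro h
    exact h6 (by apply mul_left_cancel₀ (mul_ne_zero h2 h2); linear_combination h)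
  -- Step 1: T(z,z,z) = Tc z
  have TT : ∀ z : FM F, T z z z = Tc z := by
    intro z
    have key : ∀ w : FM F, symp F (T z z z) w = symp F (Tc z) w := by
      intro w
      have e1 := (hq z w 1).symm.trans (expand z w 1)
      have e2 := (hq z w (-1)).symm.trans (expand z w (-1))
      have e3 := (hq z w 2).symm.trans (expand z w 2)
      have h0 : (24 : F) * (symp F (T z z z) w - symp F (Tc z) w) = 0 := by
        linear_combination (6:F) * e1 - (2:F) * e2 - e3
      have := (mul_eq_zero.mp h0).resolve_left h24
      exact sub_eq_zero.mp this
    have := symp_nondeg (u := T z z z - Tc z) fun w => by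
      rw [symp_sub_left, key w, sub_self]
    exact sub_eq_zero.mp this
  -- Step 2: (3 : F) • T x x y = Ec x y
  have Tadd : ∀ u v z w' : FM F, T (u + v) z w' = T u z w' + T v z w' :=
    fun u v z w' => (hlin z w').map_add u v
  have Tsmul : ∀ (s : F) (u z w' : FM F), T (s • u) z w' = s • T u z w' :=
    fun s u z w' => (hlin z w').map_smul s u
  have hE : ∀ y : FM F, (3 : F) • T x x y = Ec x y := by
    intro y
    have cube : ∀ s : F, Tc (x + s • y)
        = T x x x + (3*s) • T x x y + (3*s^2) • T x y y + s^3 • T y y y := by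
      intro s
      have e2 : ∀ u w' : FM F, T u (x + s • y) w' = T u x w' + s • T u y w' := by
        intro u w'
        rw [hsym1 u (x + s • y) w', Tadd, Tsmul, hsym1 x u w', hsym1 y u w']
      have e3 : ∀ u v : FM F, T u v (x + s • y) = T u v x + s • T u v y := by
        intro u v
        rw [hsym2 u v (x + s • y), e2, hsym2 u x v, hsym2 u y v]
      have n1 : T y x x = T x x y := by rw [hsym1, hsym2]
      have n2 : T y x y = T x y y := by rw [hsym1]
      have n3 : T y y x = T x y y := by rw [hsym2, hsym1]
      have n4 : T x y x = T x x y := hsym2 x y x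
      rw [← TT (x + s • y), Tadd, Tsmul, e2, e2, e3, e3, e3, e3, n1, n2, n3, n4]
      module
    have c1 := cube 1
    have c2 := cube (-1)
    have c3 := cube 2
    have E18 : (18 : F) • T x x y = (6:F) • Ec x y := by
      rw [← Eid x y, c1, c2, c3, ← TT x]
      module
    have : (6 : F) • ((3 : F) • T x x y - Ec x y) = 0 := by
      rw [smul_sub, smul_smul, show (6:F) * 3 = 18 by norm_num, E18, sub_self]
    have := (smul_eq_zero.mp this).resolve_left h6
    exact sub_eq_zero.mp this
  -- Step 3: the explicit equivalence
  have key : RankLeOne F x ↔ ∀ y : FM F, Ec x y + symp F x y • x = 0 := by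
    obtain ⟨a, b, A, B⟩ := x
    constructor
    · rintro ⟨hr1, hr2, hr3⟩
      have hr1' : a • A - B.adjugate = 0 := hr1
      have hr2' : b • B - A.adjugate = 0 := hr2
      have hr3' : ∀ C : Mat F, (a * b - tb F A B) • C + A * B * C + C * B * A = 0 := hr3
      have hA2 : A.adjugate - b • B = 0 := by rw [← neg_sub, hr2', neg_zero]
      have hone := hr3' 1
      rw [mul_one, one_mul] at hone
      have htr : tb F A B = 3 * (a * b) := by
        have ht := congrArg Matrix.trace hone
        rw [trace_add, trace_add, trace_smul, trace_one, trace_zero,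
          show (B * A).trace = (A * B).trace from trace_mul_comm B A,
          show (A * B).trace = tb F A B from rfl] at ht
        simp only [smul_eq_mul, Fintype.card_fin, Nat.cast_ofNat] at ht
        linear_combination -ht
      have hBA : B * A = (tb F A B - a * b) • 1 - A * B := by
        linear_combination (norm := module) hone
      have hcomm : ∀ C : Mat F, (A * B) * C = C * (A * B) := by
        intro C
        have h := hr3' C
        rw [mul_assoc C B A, hBA, mul_sub, mul_smul_comm, mul_one] at h
        linear_combination (norm := module) h
      have hABs : A * B = ((A * B) 0 0) • 1 := central hcomm
      have had : (A * B) 0 0 = a * b := by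
        have ht := congrArg Matrix.trace hABs
        rw [show (A * B).trace = tb F A B from rfl, htr, trace_smul, trace_one] at ht
        simp only [smul_eq_mul, Fintype.card_fin, Nat.cast_ofNat] at ht
        apply mul_left_cancel₀ h3
        linear_combination -ht
      have hAB : A * B = (a * b) • 1 := by rw [hABs, had]
      have hBA' : B * A = (a * b) • 1 := by
        rw [hBA, htr, hAB]; module
      intro y
      obtain ⟨g, d, C, D⟩ := y
      refine Prod.ext ?_ (Prod.ext ?_ (Prod.ext ?_ ?_))
      · show (Ec (a,b,A,B) (g,d,C,D)).1 + symp F (a,b,A,B) (g,d,C,D) * a = 0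
        rw [N1, htr, hr1', tb_zero_left]
        ring
      · show (Ec (a,b,A,B) (g,d,C,D)).2.1 + symp F (a,b,A,B) (g,d,C,D) * b = 0
        rw [N2, htr, hA2, tb_zero_left]
        ring
      · show (Ec (a,b,A,B) (g,d,C,D)).2.2.1 + symp F (a,b,A,B) (g,d,C,D) • A = 0
        rw [N3, htr, hr1', hA2, cross_zero_left, hAB, mul_assoc C B A, hBA',
          smul_mul_assoc, one_mul, mul_smul_comm, mul_one]
        module
      · show (Ec (a,b,A,B) (g,d,C,D)).2.2.2 + symp F (a,b,A,B) (g,d,C,D) • B = 0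
        rw [N4, htr, hr1', hA2, cross_zero_left, hBA', mul_assoc D A B, hAB,
          smul_mul_assoc, one_mul, mul_smul_comm, mul_one]
        module
    · intro hb
      have htr : tb F A B = 3 * (a * b) := by
        have h1c : (Ec (a,b,A,B) ((1:F),(0:F),(0:Mat F),(0:Mat F))).1
            + symp F (a,b,A,B) ((1:F),(0:F),(0:Mat F),(0:Mat F)) * a = 0 :=
          congrArg (fun p => p.1) (hb (1,0,0,0))
        rw [N1, tb_zero_right] at h1c
        linear_combination h1c
      have Hm1 : a • A - B.adjugate = 0 := by
        refine tb_nondeg fun D => ?_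
        have h1c : (Ec (a,b,A,B) ((0:F),(0:F),(0:Mat F),D)).1
            + symp F (a,b,A,B) ((0:F),(0:F),(0:Mat F),D) * a = 0 :=
          congrArg (fun p => p.1) (hb (0,0,0,D))
        rw [N1] at h1c
        have h2c : (2:F) * tb F (a • A - B.adjugate) D = 0 := by linear_combination h1c
        exact (mul_eq_zero.mp h2c).resolve_left h2
      have Hm2 : A.adjugate - b • B = 0 := by
        refine tb_nondeg fun C => ?_
        have hc : (Ec (a,b,A,B) ((0:F),(0:F),C,(0:Mat F))).2.1
            + symp F (a,b,A,B) ((0:F),(0:F),C,(0:Mat F)) * b = 0 :=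
          congrArg (fun p => p.2.1) (hb (0,0,C,0))
        rw [N2] at hc
        have h2c : (2:F) * tb F (A.adjugate - b • B) C = 0 := by linear_combination hc
        exact (mul_eq_zero.mp h2c).resolve_left h2
      refine ⟨Hm1, ?_, ?_⟩
      · show b • B - A.adjugate = 0
        rw [← neg_sub, Hm2, neg_zero]
      · intro C
        show (a * b - tb F A B) • C + A * B * C + C * B * A = 0
        have h3c : (Ec (a,b,A,B) ((0:F),(0:F),C,(0:Mat F))).2.2.1
            + symp F (a,b,A,B) ((0:F),(0:F),C,(0:Mat F)) • A = 0 :=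
          congrArg (fun p => p.2.2.1) (hb (0,0,C,0))
        rw [N3, Hm1, Hm2, cross_zero_left, htr] at h3c
        have hkey : (-2:F) • ((a * b - tb F A B) • C + A * B * C + C * B * A) = 0 := by
          rw [htr]
          linear_combination (norm := module) h3c
        exact (smul_eq_zero.mp hkey).resolve_left (neg_ne_zero.mpr h2)
  rw [key]
  constructor
  · intro h y
    rw [hE y]
    exact h y
  · intro h y
    rw [← hE y]
    exact h y
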